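/- Let H be a distributive Ω-expanded group and g = (g₁,...,g_m) a tuple of elements generating the additive group of H as a monoid under + (equivalently, generating (H,+) since H is finite or by assumption every element is a sum of the gᵢ). Then every additive subgroup A of H that is closed under the unary operations χᵢ(h) = -gᵢ + h + gᵢ and h ↦ ω(g_{d₁},...,g_{d_{j-1}}, h, g_{d_{j+1}},...,g_{d_{ar ω}}) (for all nonnullary ω, positions j, and indices d₁,...,d_{ar ω} ∈ {1,...,m}) is an ideal of H. -/

import Mathlib

/-- Distributivity of the extra operations of an Ω-expanded group over `+`. -/
def IsDistribExpansion {Ω : Type*} (ar : Ω → ℕ) {H : Type*} [AddGroup H]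
    (op : ∀ ω : Ω, (Fin (ar ω) → H) → H) : Prop :=
  ∀ (ω : Ω) (i : Fin (ar ω)) (h : Fin (ar ω) → H) (a b : H),
    op ω (Function.update h i (a + b)) =
      op ω (Function.update h i a) + op ω (Function.update h i b)

/-- An ideal of a distributive Ω-expanded group: a normal subgroup `A` of the additive
group with `ω(H,...,H,A,H,...,H) ⊆ A` for every nonnullary `ω` and every position. -/
def IsIdealSet {Ω : Type*} (ar : Ω → ℕ) {H : Type*} [AddGroup H]
    (op : ∀ ω : Ω, (Fin (ar ω) → H) → H) (A : Set H) : Prop :=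
  ((0 : H) ∈ A ∧ (∀ a ∈ A, ∀ b ∈ A, a + b ∈ A) ∧ (∀ a ∈ A, -a ∈ A) ∧
      ∀ h : H, ∀ a ∈ A, -h + a + h ∈ A) ∧
    ∀ (ω : Ω) (i : Fin (ar ω)) (h : Fin (ar ω) → H), ∀ a ∈ A,
      op ω (Function.update h i a) ∈ A

/-- Let `H` be a distributive Ω-expanded group in which every element is a sum of the
`gᵢ`.  Then every additive subgroup `A` of `H` that is closed under the conjugations
`χᵢ(h) = -gᵢ + h + gᵢ` and under the unary operations
`h ↦ ω(g_{d₁},...,h,...,g_{d_{ar ω}})` (with `h` at position `j`) is an ideal of `H`. -/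
theorem stmt_12 {Ω : Type*} (ar : Ω → ℕ) {H : Type*} [AddGroup H]
    (op : ∀ ω : Ω, (Fin (ar ω) → H) → H) (hdis : IsDistribExpansion ar op)
    (m : ℕ) (g : Fin m → H)
    (hgen : ∀ h : H, h ∈ AddSubmonoid.closure (Set.range g))
    (A : Set H)
    (hsub : (0 : H) ∈ A ∧ (∀ a ∈ A, ∀ b ∈ A, a + b ∈ A) ∧ (∀ a ∈ A, -a ∈ A))
    (hchi : ∀ i : Fin m, ∀ a ∈ A, -g i + a + g i ∈ A)
    (hpsi : ∀ (ω : Ω) (j : Fin (ar ω)) (d : Fin (ar ω) → Fin m), ∀ a ∈ A,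
      op ω (Function.update (fun t => g (d t)) j a) ∈ A) :
    IsIdealSet ar op A := by
  obtain ⟨hzero, hadd, hneg⟩ := hsub
  -- op vanishes when a coordinate is 0
  have hz : ∀ (ω : Ω) (j : Fin (ar ω)) (h : Fin (ar ω) → H),
      op ω (Function.update h j 0) = 0 := by
    intro ω j h
    have h1 := hdis ω j h 0 0
    rw [add_zero] at h1
    exact (add_eq_left (a := op ω (Function.update h j 0))).mp h1.symm
  -- normality
  have hnorm : ∀ h : H, ∀ a ∈ A, -h + a + h ∈ A := by
    intro h
    induction hgen h using AddSubmonoid.closure_induction with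
    | mem x hx =>
      obtain ⟨i, rfl⟩ := hx
      exact hchi i
    | zero => intro a ha; simpa using ha
    | add x y hx hy px py =>
      intro a ha
      have h2 : -(x + y) + a + (x + y) = -y + (-x + a + x) + y := by
        simp [neg_add, add_assoc]
      rw [h2]
      exact py _ (px a ha)
  refine ⟨⟨hzero, hadd, hneg, hnorm⟩, ?_⟩
  intro ω i
  -- main claim, by filling coordinates one at a time
  have key : ∀ n : ℕ, ∀ h : Fin (ar ω) → H,
      (∀ j : Fin (ar ω), j ≠ i → n ≤ j.val → h j ∈ Set.range g) →
      ∀ a ∈ A, op ω (Function.update h i a) ∈ A := by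
    intro n
    induction n with
    | zero =>
      intro h hh a ha
      rcases Nat.eq_zero_or_pos m with hm0 | hm0
      · subst hm0
        have hrange : Set.range g = (∅ : Set H) := Set.range_eq_empty _
        have ha0 : a = 0 := by
          have := hgen a
          rw [hrange, AddSubmonoid.closure_empty] at this
          simpa using this
        subst ha0
        rw [hz]
        exact hzero
      · have hex : ∀ j : Fin (ar ω), ∃ t : Fin m, j ≠ i → h j = g t := by
          intro j
          by_cases hj : j = i
          · exact ⟨⟨0, hm0⟩, fun hji => absurd hj hji⟩
          · obtain ⟨t, ht⟩ := hh j hj (Nat.zero_le _)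
            exact ⟨t, fun _ => ht.symm⟩
        choose d hd using hex
        have e : Function.update h i a = Function.update (fun t => g (d t)) i a := by
          funext j
          by_cases hj : j = i
          · subst hj; simp
          · simp [Function.update_of_ne hj, hd j hj]
        rw [e]
        exact hpsi ω i d a ha
    | succ n ih =>
      intro h hh a ha
      by_cases hn : n < ar ω
      · set j : Fin (ar ω) := ⟨n, hn⟩ with hj
        by_cases hji : j = i
        · apply ih h _ a ha
          intro j' hj' hle
          apply hh j' hj'
          rcases Nat.lt_or_ge n j'.val with h1 | h1
          · exact h1
          · exact absurd (Fin.ext (Nat.le_antisymm hle h1) : j = j') (by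
              intro he; exact hj' (he ▸ hji))
        · -- induct on h j in the closure
          have main : ∀ x : H, op ω (Function.update (Function.update h j x) i a) ∈ A := by
            intro x
            induction hgen x using AddSubmonoid.closure_induction with
            | mem y hy =>
              apply ih _ _ a ha
              intro j' hj' hle
              by_cases hjj : j' = j
              · subst hjj; simpa using hy
              · rw [Function.update_of_ne hjj]
                apply hh j' hj'
                rcases Nat.lt_or_ge n j'.val with h1 | h1
                · exact h1
                · exact absurd (Fin.ext (Nat.le_antisymm hle h1) : j = j') (fun he => hjj he.symm)
            | zero =>
              have : Function.update (Function.update h j 0) i a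
                  = Function.update (Function.update h i a) j 0 :=
                Function.update_comm hji _ _ _
              rw [this, hz]
              exact hzero
            | add x y hx hy px py =>
              have e : ∀ z : H, Function.update (Function.update h j z) i a
                  = Function.update (Function.update h i a) j z := fun z =>
                Function.update_comm hji _ _ _
              rw [e, hdis ω j _ x y, ← e, ← e]
              exact hadd _ px _ py
          have := main (h j)
          rwa [Function.update_eq_self] at this
      · apply ih h _ a ha
        intro j' hj' hle
        exact absurd hle (Nat.not_le.mpr (lt_of_lt_of_le j'.isLt (Nat.le_of_not_lt hn)))
  intro h a ha
  exact key (ar ω) h (fun j _ hle => absurd j.isLt (Nat.not_lt.mpr hle)) a ha
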